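/- (Equational criterion for vanishing in tensor products.) Let S be a commutative ring, M and N S-modules, m₁,…,m_t ∈ M, and n₁,…,n_t a generating set of N. Then Σᵢ mᵢ ⊗ nᵢ = 0 in M ⊗_S N if and only if there exist m'₁,…,m'_s ∈ M and a_{ij} ∈ S such that Σⱼ a_{ij} m'ⱼ = mᵢ for all i, and Σᵢ a_{ij} nᵢ = 0 for all j. -/

import Mathlib

open TensorProduct

/-- **Equational criterion for vanishing in tensor products** (Eisenbud, Lemma 6.4).
Let `S` be a commutative ring, `M`, `N` `S`-modules, `m₁, …, m_t ∈ M` and `n₁, …, n_t`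
a generating set of `N`. Then `Σᵢ mᵢ ⊗ nᵢ = 0` in `M ⊗_S N` iff there exist
`m'₁, …, m'_s ∈ M` and `a_{ij} ∈ S` with `Σⱼ a_{ij} m'ⱼ = mᵢ` for all `i` and
`Σᵢ a_{ij} nᵢ = 0` for all `j`. -/
theorem sum_tmul_eq_zero_iff_equational
    (S : Type*) [CommRing S]
    (M N : Type*) [AddCommGroup M] [Module S M] [AddCommGroup N] [Module S N]
    (t : ℕ) (m : Fin t → M) (n : Fin t → N)
    (hn : Submodule.span S (Set.range n) = ⊤) :
    (∑ i, m i ⊗ₜ[S] n i) = (0 : M ⊗[S] N) ↔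
      ∃ (s : ℕ) (m' : Fin s → M) (a : Fin t → Fin s → S),
        (∀ i, ∑ j, a i j • m' j = m i) ∧ (∀ j, ∑ i, a i j • n i = 0) := by
  constructor
  · intro hmn
    -- surjection π : (Fin t → S) → N
    set π : (Fin t → S) →ₗ[S] N := Fintype.linearCombination S n with hπ
    have hπ_surj : Function.Surjective π := by
      rw [← LinearMap.range_eq_top, hπ, Fintype.range_linearCombination, hn]
    set K := LinearMap.ker π with hK
    have hexact : Function.Exact (LinearMap.lTensor M K.subtype)
        (LinearMap.lTensor M π) :=
      lTensor_exact M (LinearMap.exact_subtype_ker_map π) hπ_surj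
    set x : M ⊗[S] (Fin t → S) := ∑ i, m i ⊗ₜ Pi.single i 1 with hx
    have hx0 : LinearMap.lTensor M π x = 0 := by
      rw [hx, map_sum]
      simpa [hπ] using hmn
    obtain ⟨y, hy⟩ := (hexact x).mp hx0
    obtain ⟨T, hT⟩ := TensorProduct.exists_finset y
    -- index T by Fin s
    set s : ℕ := Fintype.card T with hs
    set e : T ≃ Fin s := Fintype.equivFin T with he
    set m' : Fin s → M := fun j => ((e.symm j : T) : M × K).1 with hm'
    set k : Fin s → K := fun j => ((e.symm j : T) : M × K).2 with hk
    have hxeq : x = ∑ j, m' j ⊗ₜ[S] ((k j : Fin t → S)) := by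
      have h2 := (Equiv.sum_comp e.symm
          (fun i : T => (i : M × K).1 ⊗ₜ[S] (((i : M × K).2 : Fin t → S)))).trans
        (Finset.sum_coe_sort T (fun i => i.1 ⊗ₜ[S] ((i.2 : Fin t → S))))
      rw [← hy, hT, map_sum]
      exact h2.symm
    refine ⟨s, m', fun i j => (k j : Fin t → S) i, ?_, ?_⟩
    · intro i
      -- apply component map φ_i
      have := congrArg ((TensorProduct.rid S M).toLinearMap.comp
        (LinearMap.lTensor M (LinearMap.proj i (φ := fun _ : Fin t => S)))) hxeq
      simpa [hx, map_sum, Pi.single_apply, Finset.sum_ite_eq,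
        TensorProduct.smul_tmul'] using this.symm
    · intro j
      have h0 : π ((k j : Fin t → S)) = 0 := LinearMap.mem_ker.mp (k j).2
      rw [hπ, Fintype.linearCombination_apply] at h0
      exact h0
  · rintro ⟨s, m', a, h₁, h₂⟩
    calc ∑ i, m i ⊗ₜ[S] n i = ∑ i, (∑ j, a i j • m' j) ⊗ₜ[S] n i := by
          simp_rw [h₁]
      _ = ∑ j, m' j ⊗ₜ[S] (∑ i, a i j • n i) := by
          simp_rw [TensorProduct.sum_tmul, tmul_sum, TensorProduct.smul_tmul]
          rw [Finset.sum_comm]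
      _ = 0 := by simp [h₂]
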